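/- Let U be an open subset of ℝ^n and let k ≥ 1 and l ≥ k+1 be integers. Let f : U → ℝ be a function such that the function x ↦ |f(x)|^{1/l} (the real l-th root of the absolute value of f) is of class C^k on U. If g : U → ℝ is a continuous function such that |g(x)| = |f(x)| for all x ∈ U, then g is of class C^k on U. -/

import Mathlib

open Filter Topology Asymptotics

/-- Key lemma: if `h` is `C^k` and nonnegative on an open set `U`, `l ≥ k+1`, and `g` is
continuous on `U` with `|g| = h ^ l` on `U`, then `g` is `C^k` on `U`. -/
lemma key_root_lemma {E : Type*} [NormedAddCommGroup E] [NormedSpace ℝ E] :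
    ∀ (k : ℕ) (l : ℕ), k + 1 ≤ l → ∀ (U : Set E), IsOpen U → ∀ (h g : E → ℝ),
    ContDiffOn ℝ k h U → (∀ x ∈ U, 0 ≤ h x) → ContinuousOn g U →
    (∀ x ∈ U, |g x| = h x ^ l) → ContDiffOn ℝ k g U := by
  intro k
  induction k with
  | zero =>
    intro l _ U _ h g _ _ hg _
    simpa [contDiffOn_zero] using hg
  | succ k IH =>
    intro l hl U hU h g hh hpos hg hgh
    have hl1 : (1 : ℕ) ≤ l := by omega
    set g₁ : E → ℝ := fun x => if h x = 0 then 0 else g x / h x with hg₁def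
    have hpowsub : ∀ x : E, h x ^ l = h x ^ (l - 1) * h x := by
      intro x
      rw [← pow_succ]
      congr 1
      omega
    have habs : ∀ x ∈ U, |g₁ x| = h x ^ (l - 1) := by
      intro x hx
      by_cases hx0 : h x = 0
      · simp [hg₁def, hx0, zero_pow (show l - 1 ≠ 0 by omega)]
      · have hxpos : 0 < h x := lt_of_le_of_ne (hpos x hx) (Ne.symm hx0)
        rw [hg₁def]
        simp only [if_neg hx0]
        rw [abs_div, hgh x hx, abs_of_pos hxpos, hpowsub x,
          mul_div_cancel_right₀ _ hx0]
    have hdiffh : ∀ x ∈ U, DifferentiableAt ℝ h x := by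
      intro x hx
      exact (hh.differentiableOn (by simp)
        ).differentiableAt (hU.mem_nhds hx)
    have hg1cont : ContinuousOn g₁ U := by
      intro x hx
      apply ContinuousAt.continuousWithinAt
      by_cases hx0 : h x = 0
      · have hval : g₁ x = 0 := by simp [hg₁def, hx0]
        rw [ContinuousAt, hval]
        rw [tendsto_zero_iff_abs_tendsto_zero]
        have htend : Tendsto (fun y => h y ^ (l - 1)) (𝓝 x) (𝓝 0) := by
          have := ((hdiffh x hx).continuousAt.pow (l - 1))
          rw [ContinuousAt, Pi.pow_apply, hx0, zero_pow (show l - 1 ≠ 0 by omega)] at this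
          exact this
        apply squeeze_zero' (g := fun y => h y ^ (l - 1)) _ _ htend
        · exact Eventually.of_forall fun y => abs_nonneg _
        · filter_upwards [hU.mem_nhds hx] with y hy using le_of_eq (habs y hy)
      · have hcont : ContinuousAt (fun y => g y / h y) x :=
          (hg.continuousAt (hU.mem_nhds hx)).div (hdiffh x hx).continuousAt hx0
        apply hcont.congr
        filter_upwards [(hdiffh x hx).continuousAt.eventually_ne hx0] with y hy
        simp [hg₁def, hy]
    have hg1 : ContDiffOn ℝ k g₁ U :=
      IH (l - 1) (by omega) U hU h g₁
        (hh.of_le (by exact_mod_cast Nat.le_succ k)) hpos hg1cont habs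
    have hF : ∀ x ∈ U, HasFDerivAt g (((l : ℝ) * g₁ x) • fderiv ℝ h x) x := by
      intro x hx
      by_cases hx0 : h x = 0
      · have hgx : g x = 0 := by
          have := hgh x hx
          rw [hx0, zero_pow (show l ≠ 0 by omega)] at this
          exact abs_eq_zero.mp this
        have hg1x : g₁ x = 0 := by simp [hg₁def, hx0]
        rw [hg1x]
        have hzero : ((l : ℝ) * (0 : ℝ)) • fderiv ℝ h x = 0 := by simp
        rw [hzero]
        rw [hasFDerivAt_iff_isLittleO]
        simp only [ContinuousLinearMap.zero_apply, sub_zero, hgx]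
        -- g =O h^l =O ‖y-x‖^l =o (y - x)
        have h1 : (fun y => g y) =O[𝓝 x] fun y => h y ^ l := by
          apply IsBigO.of_bound 1
          filter_upwards [hU.mem_nhds hx] with y hy
          rw [one_mul, Real.norm_eq_abs, Real.norm_eq_abs, hgh y hy,
            abs_of_nonneg (pow_nonneg (hpos y hy) l)]
        have hO : (fun y => h y) =O[𝓝 x] fun y => y - x := by
          have := (hdiffh x hx).isBigO_sub
          simpa [hx0] using this
        have h2 : (fun y => h y ^ l) =O[𝓝 x] fun y => ‖y - x‖ ^ l :=
          hO.norm_right.pow l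
        have h3 : (fun y : E => ‖y - x‖ ^ l) =o[𝓝 x] fun y => y - x := by
          rw [← isLittleO_norm_right]
          have hsmall : Tendsto (fun y : E => ‖y - x‖ ^ (l - 1)) (𝓝 x) (𝓝 0) := by
            have : Tendsto (fun y : E => ‖y - x‖) (𝓝 x) (𝓝 0) := by
              have h0 : Tendsto (fun y : E => y - x) (𝓝 x) (𝓝 0) := by
                simpa using (tendsto_id (x := 𝓝 x)).sub_const x
              simpa using h0.norm
            simpa [zero_pow (show l - 1 ≠ 0 by omega)] using this.pow (l - 1)
          have hlo : (fun y : E => ‖y - x‖ ^ (l - 1)) =o[𝓝 x] fun _ => (1 : ℝ) :=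
            (isLittleO_one_iff ℝ).mpr hsmall
          have := hlo.mul_isBigO (isBigO_refl (fun y : E => ‖y - x‖) (𝓝 x))
          simp only [one_mul] at this
          apply this.congr_left
          intro y
          rw [← pow_succ]
          congr 1
          omega
        exact (h1.trans h2).trans_isLittleO h3
      · have hxpos : 0 < h x := lt_of_le_of_ne (hpos x hx) (Ne.symm hx0)
        have hpow : HasFDerivAt (fun y => h y ^ l)
            (((l : ℝ) * h x ^ (l - 1)) • fderiv ℝ h x) x :=
          (hasDerivAt_pow l (h x)).comp_hasFDerivAt x (hdiffh x hx).hasFDerivAt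
        have hgx : g x ≠ 0 := by
          intro hc
          have := hgh x hx
          rw [hc, abs_zero] at this
          exact pow_ne_zero l hx0 this.symm
        have hgc : ContinuousAt g x := hg.continuousAt (hU.mem_nhds hx)
        rcases hgx.lt_or_gt with hneg | hposg
        · -- g x < 0 : g = -(h ^ l) near x
          have heq : g =ᶠ[𝓝 x] fun y => -(h y ^ l) := by
            filter_upwards [hU.mem_nhds hx, hgc.eventually (eventually_lt_nhds hneg)]
              with y hy hylt
            have := hgh y hy
            rw [abs_of_neg hylt] at this
            linarith
          have hg1x : g₁ x = -(h x ^ (l - 1)) := by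
            have hgval : g x = -(h x ^ l) := by
              have := hgh x hx
              rw [abs_of_neg hneg] at this
              linarith
            rw [hg₁def]
            simp only [if_neg hx0]
            rw [hgval, hpowsub x, neg_div, mul_div_cancel_right₀ _ hx0]
          have hder := hpow.neg.congr_of_eventuallyEq heq
          rw [hg1x, mul_neg, neg_smul]
          exact hder
        · -- g x > 0 : g = h ^ l near x
          have heq : g =ᶠ[𝓝 x] fun y => h y ^ l := by
            filter_upwards [hU.mem_nhds hx, hgc.eventually (eventually_gt_nhds hposg)]
              with y hy hygt
            have := hgh y hy
            rw [abs_of_pos hygt] at this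
            exact this
          have hg1x : g₁ x = h x ^ (l - 1) := by
            have hgval : g x = h x ^ l := by
              have := hgh x hx
              rw [abs_of_pos hposg] at this
              exact this
            rw [hg₁def]
            simp only [if_neg hx0]
            rw [hgval, hpowsub x, mul_div_cancel_right₀ _ hx0]
          rw [hg1x]
          exact hpow.congr_of_eventuallyEq heq
    have hdiffOn : DifferentiableOn ℝ g U := fun x hx =>
      (hF x hx).differentiableAt.differentiableWithinAt
    have hFcd : ContDiffOn ℝ k (fun x => ((l : ℝ) * g₁ x) • fderiv ℝ h x) U := by
      apply ContDiffOn.smul (f := fun x => (l : ℝ) * g₁ x) (g := fun x => fderiv ℝ h x)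
      · exact (contDiffOn_const.mul hg1)
      · exact hh.fderiv_of_isOpen hU (by exact_mod_cast le_rfl)
    have hfderiv : ContDiffOn ℝ k (fderiv ℝ g) U := by
      apply hFcd.congr
      intro x hx
      exact (hF x hx).fderiv
    have hcast : ((k + 1 : ℕ) : WithTop ℕ∞) = (k : WithTop ℕ∞) + 1 := by push_cast; rfl
    rw [hcast]
    rw [contDiffOn_succ_iff_fderiv_of_isOpen hU]
    refine ⟨hdiffOn, ?_, hfderiv⟩
    intro hcontra
    exact absurd hcontra (by simp)

/-- Let `U ⊆ ℝⁿ` be open, `k ≥ 1`, `l ≥ k + 1`. If `f : U → ℝ` is such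
that `x ↦ |f x| ^ (1/l)` is of class `C^k` on `U`, and `g` is continuous on `U` with
`|g| = |f|` on `U`, then `g` is of class `C^k` on `U`. -/
theorem stmt0 (n k l : ℕ) (hk : 1 ≤ k) (hl : k + 1 ≤ l)
    (U : Set (Fin n → ℝ)) (hU : IsOpen U)
    (f g : (Fin n → ℝ) → ℝ)
    (hf : ContDiffOn ℝ k (fun x => |f x| ^ ((1 : ℝ) / (l : ℝ))) U)
    (hg : ContinuousOn g U)
    (hfg : ∀ x ∈ U, |g x| = |f x|) :
    ContDiffOn ℝ k g U := by
  have hl0 : (l : ℝ) ≠ 0 := Nat.cast_ne_zero.mpr (by omega)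
  apply key_root_lemma k l hl U hU (fun x => |f x| ^ ((1 : ℝ) / (l : ℝ))) g hf
  · intro x _
    exact Real.rpow_nonneg (abs_nonneg _) _
  · exact hg
  · intro x hx
    rw [hfg x hx, ← Real.rpow_natCast (|f x| ^ ((1 : ℝ) / (l : ℝ))) l,
      ← Real.rpow_mul (abs_nonneg _), one_div, inv_mul_cancel₀ hl0, Real.rpow_one]
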